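/- Let β: ℕ → [0,∞) satisfy β(j) ≤ C_β b^j for b ∈ (0,1), let H, δ > 0 with δ ≤ 1 and H ≤ max{δ², C²δ} for a constant C ≥ 1. Then Σ_{j=1}^{∞} min{ δ, 4 H^{1/2} β(j)^{1/2} } ≤ C̄ δ (1 + |log δ|) for a constant C̄ depending only on C, C_β, b. -/

import Mathlib

lemma aux12 (r K : ℝ) (hr0 : 0 < r) (hr1 : r < 1) (hK : 0 < K) :
    ∃ Cbar : ℝ, 0 < Cbar ∧ ∀ δ : ℝ, 0 < δ → δ ≤ 1 → ∀ f : ℕ → ℝ,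
      (∀ j, 0 ≤ f j) → (∀ j, f j ≤ δ) → (∀ j, f j ≤ K * Real.sqrt δ * r ^ j) →
      ∑' j, f j ≤ Cbar * δ * (1 + |Real.log δ|) := by
  have hlogr : Real.log r < 0 := Real.log_neg hr0 hr1
  set L : ℝ := -Real.log r with hLdef
  have hL : 0 < L := by simp [hLdef]; linarith
  have h1r : 0 < 1 - r := by linarith
  refine ⟨1 + |Real.log K| / L + 1 / (2 * L) + 1 / (1 - r), by positivity, ?_⟩
  intro δ hδ0 hδ1 f hf0 hfδ hfg
  set s := Real.sqrt δ with hs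
  have hs0 : 0 < s := Real.sqrt_pos.mpr hδ0
  have hss : s * s = δ := Real.mul_self_sqrt hδ0.le
  set x : ℝ := Real.log (K / s) / L with hx
  set N := ⌈x⌉₊ with hN
  have hxN : x ≤ (N : ℝ) := Nat.le_ceil x
  have hrN : K * s * r ^ N ≤ δ := by
    have h1 : (N : ℝ) * Real.log r ≤ x * Real.log r :=
      mul_le_mul_of_nonpos_right hxN hlogr.le
    have h2 : x * Real.log r = Real.log (s / K) := by
      rw [hx]
      rw [Real.log_div hs0.ne' hK.ne', Real.log_div hK.ne' hs0.ne']
      field_simp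
      ring
    have h3 : r ^ N = Real.exp ((N : ℝ) * Real.log r) := by
      rw [Real.exp_nat_mul, Real.exp_log hr0]
    have h4 : r ^ N ≤ s / K := by
      rw [h3]
      calc Real.exp ((N : ℝ) * Real.log r) ≤ Real.exp (x * Real.log r) :=
            Real.exp_le_exp.mpr h1
        _ = s / K := by rw [h2, Real.exp_log (by positivity)]
    calc K * s * r ^ N ≤ K * s * (s / K) := by
          apply mul_le_mul_of_nonneg_left h4 (by positivity)
      _ = s * s := by field_simp
      _ = δ := hss
  have hgsum : Summable (fun j : ℕ => K * s * r ^ j) :=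
    (summable_geometric_of_lt_one hr0.le hr1).mul_left (K * s)
  have hsum : Summable f := Summable.of_nonneg_of_le hf0 hfg hgsum
  have hsplit := Summable.sum_add_tsum_nat_add (f := f) N hsum
  have hpart1 : ∑ i ∈ Finset.range N, f i ≤ (N : ℝ) * δ := by
    calc ∑ i ∈ Finset.range N, f i ≤ ∑ i ∈ Finset.range N, δ :=
          Finset.sum_le_sum fun i _ => hfδ i
      _ = (N : ℝ) * δ := by simp [mul_comm]
  have hδgsum : Summable (fun j : ℕ => δ * r ^ j) :=
    (summable_geometric_of_lt_one hr0.le hr1).mul_left δ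
  have hpart2 : ∑' i : ℕ, f (i + N) ≤ δ / (1 - r) := by
    have hle : ∀ i : ℕ, f (i + N) ≤ δ * r ^ i := by
      intro i
      calc f (i + N) ≤ K * s * r ^ (i + N) := hfg (i + N)
        _ = (K * s * r ^ N) * r ^ i := by ring
        _ ≤ δ * r ^ i := by
            apply mul_le_mul_of_nonneg_right hrN (by positivity)
    calc ∑' i : ℕ, f (i + N) ≤ ∑' i : ℕ, δ * r ^ i :=
          Summable.tsum_le_tsum hle ((summable_nat_add_iff N).mpr hsum) hδgsum
      _ = δ * (1 - r)⁻¹ := by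
          rw [tsum_mul_left, tsum_geometric_of_lt_one hr0.le hr1]
      _ = δ / (1 - r) := by ring
  have hNle : (N : ℝ) ≤ |x| + 1 := by
    have h1 : N ≤ ⌈|x|⌉₊ := Nat.ceil_mono (le_abs_self x)
    have h2 : (⌈|x|⌉₊ : ℝ) < |x| + 1 := Nat.ceil_lt_add_one (abs_nonneg x)
    calc (N : ℝ) ≤ (⌈|x|⌉₊ : ℝ) := by exact_mod_cast h1
      _ ≤ |x| + 1 := h2.le
  have hxle : |x| ≤ (|Real.log K| + |Real.log δ| / 2) / L := by
    rw [hx, abs_div, abs_of_pos hL]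
    gcongr
    · rw [Real.log_div hK.ne' hs0.ne']
      calc |Real.log K - Real.log s| ≤ |Real.log K| + |Real.log s| := abs_sub _ _
        _ = |Real.log K| + |Real.log δ| / 2 := by
            rw [hs, Real.log_sqrt hδ0.le, abs_div]
            norm_num
  have habs : 0 ≤ |Real.log δ| := abs_nonneg _
  calc ∑' j, f j = ∑ i ∈ Finset.range N, f i + ∑' i : ℕ, f (i + N) := hsplit.symm
    _ ≤ (N : ℝ) * δ + δ / (1 - r) := add_le_add hpart1 hpart2
    _ ≤ (|x| + 1) * δ + δ / (1 - r) :=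
        add_le_add_left (mul_le_mul_of_nonneg_right hNle hδ0.le) _
    _ ≤ ((|Real.log K| + |Real.log δ| / 2) / L + 1) * δ + δ / (1 - r) :=
        add_le_add_left (mul_le_mul_of_nonneg_right (add_le_add_left hxle 1) hδ0.le) _
    _ ≤ (1 + |Real.log K| / L + 1 / (2 * L) + 1 / (1 - r)) * δ * (1 + |Real.log δ|) := by
        set a := |Real.log K| / L with ha
        set p := (1 : ℝ) / (2 * L) with hp
        set q := (1 : ℝ) / (1 - r) with hq
        set B := |Real.log δ| with hB
        have ha0 : 0 ≤ a := by positivity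
        have hp0 : 0 ≤ p := by positivity
        have hq0 : 0 ≤ q := by positivity
        have hL' : L ≠ 0 := hL.ne'
        have e0 : (|Real.log K| + B / 2) / L = a + p * B := by
          rw [ha, hp]; field_simp
        have e1 : δ / (1 - r) = q * δ := by rw [hq]; ring
        rw [e0, e1]
        have ediff : (1 + a + p + q) * δ * (1 + B) - ((a + p * B + 1) * δ + q * δ)
            = p * δ + δ * B + a * (δ * B) + q * (δ * B) := by ring
        nlinarith [mul_nonneg hp0 hδ0.le, mul_nonneg hδ0.le habs,
          mul_nonneg ha0 (mul_nonneg hδ0.le habs), mul_nonneg hq0 (mul_nonneg hδ0.le habs)]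

/-- series estimate: Σⱼ min{δ, 4√H √β(j)} ≤ C̄ δ (1 + |log δ|)
whenever H ≤ max{δ², C²δ} and β decays exponentially. -/
theorem stmt12 (C Cβ b : ℝ) (βc : ℕ → ℝ) (hC : 1 ≤ C) (hCβ : 0 < Cβ)
    (hb0 : 0 < b) (hb1 : b < 1)
    (hβ0 : ∀ j, 0 ≤ βc j) (hβ : ∀ j, βc j ≤ Cβ * b ^ j) :
    ∃ Cbar : ℝ, 0 < Cbar ∧ ∀ δ H : ℝ, 0 < δ → δ ≤ 1 → 0 < H →
      H ≤ max (δ ^ 2) (C ^ 2 * δ) →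
      ∑' j : ℕ, min δ (4 * Real.sqrt H * Real.sqrt (βc (j + 1)))
        ≤ Cbar * δ * (1 + |Real.log δ|) := by
  have hC0 : 0 < C := lt_of_lt_of_le one_pos hC
  have hrb0 : 0 < Real.sqrt b := Real.sqrt_pos.mpr hb0
  have hrb1 : Real.sqrt b < 1 := by
    rw [show (1:ℝ) = Real.sqrt 1 by simp]
    exact Real.sqrt_lt_sqrt hb0.le hb1
  have hK : 0 < 4 * C * Real.sqrt Cβ * Real.sqrt b := by positivity
  obtain ⟨Cbar, hCbar0, hCbar⟩ := aux12 (Real.sqrt b) (4 * C * Real.sqrt Cβ * Real.sqrt b)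
    hrb0 hrb1 hK
  refine ⟨Cbar, hCbar0, ?_⟩
  intro δ H hδ0 hδ1 hH0 hHle
  apply hCbar δ hδ0 hδ1
  · intro j; positivity
  · intro j; exact min_le_left _ _
  · intro j
    have hmax : max (δ ^ 2) (C ^ 2 * δ) ≤ C ^ 2 * δ := by
      apply max_le _ le_rfl
      have h1 : δ ^ 2 ≤ δ := by nlinarith
      have hC2 : (1:ℝ) ≤ C ^ 2 := by nlinarith
      have h2 : δ ≤ C ^ 2 * δ := by nlinarith [mul_le_mul_of_nonneg_right hC2 hδ0.le]
      linarith
    have hH : H ≤ C ^ 2 * δ := hHle.trans hmax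
    have hsqH : Real.sqrt H ≤ C * Real.sqrt δ := by
      calc Real.sqrt H ≤ Real.sqrt (C ^ 2 * δ) := Real.sqrt_le_sqrt hH
        _ = C * Real.sqrt δ := by
            rw [Real.sqrt_mul (by positivity), Real.sqrt_sq hC0.le]
    have hsqβ : Real.sqrt (βc (j + 1)) ≤ Real.sqrt Cβ * Real.sqrt b ^ (j + 1) := by
      calc Real.sqrt (βc (j + 1)) ≤ Real.sqrt (Cβ * b ^ (j + 1)) :=
            Real.sqrt_le_sqrt (hβ (j + 1))
        _ = Real.sqrt Cβ * Real.sqrt b ^ (j + 1) := by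
            rw [Real.sqrt_mul hCβ.le]
            congr 1
            have h : b ^ (j + 1) = (Real.sqrt b ^ (j + 1)) ^ 2 := by
              rw [← pow_mul, mul_comm, pow_mul, Real.sq_sqrt hb0.le]
            rw [h, Real.sqrt_sq (by positivity)]
    calc min δ (4 * Real.sqrt H * Real.sqrt (βc (j + 1)))
        ≤ 4 * Real.sqrt H * Real.sqrt (βc (j + 1)) := min_le_right _ _
      _ ≤ 4 * (C * Real.sqrt δ) * (Real.sqrt Cβ * Real.sqrt b ^ (j + 1)) := by
          apply mul_le_mul _ hsqβ (Real.sqrt_nonneg _) (by positivity)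
          apply mul_le_mul_of_nonneg_left hsqH (by norm_num)
      _ = 4 * C * Real.sqrt Cβ * Real.sqrt b * Real.sqrt δ * Real.sqrt b ^ j := by
          ring
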